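/- Let k ≥ 1 be an integer and let e_1, …, e_{3k} denote the standard basis of ℚ^{3k}. Let C ⊆ ℚ^{3k} be the set of 6k vectors consisting, for each β = 0, 1, …, k − 1, of the six vectors e_{3β+1}, e_{3β+2}, e_{3β+3}, e_{3β+1} − e_{3β+2}, e_{3β+2} − e_{3β+3}, e_{3β+1} − e_{3β+3}. Then the depth chart of C satisfies d_C(0) = 0, d_C(1) = 1, d_C(2) = 2, d_C(3) = 2, d_C(4) = 3, d_C(5) = 3, and d_C(6) = 3. -/

import Mathlib

/-- The depth chart of a finite set `A` of vectors in `ℚⁿ`: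
`d_A(k)` is the minimum of `dim span_ℚ(S)` over all `k`-element subsets `S` of `A`
when `0 ≤ k ≤ |A|`, and `0` otherwise. -/
noncomputable def depthChart {n : ℕ} (A : Finset (Fin n → ℚ)) (k : ℤ) : ℤ :=
  if h : 0 ≤ k ∧ k ≤ (A.card : ℤ) then
    (A.powersetCard k.toNat).inf'
      (Finset.powersetCard_nonempty.mpr (by omega))
      (fun S => (Module.finrank ℚ (Submodule.span ℚ (S : Set (Fin n → ℚ))) : ℤ))
  else 0

/-- The `i`-th standard basis vector of `ℚⁿ` (indexed from `0`); equals `0` if `i ≥ n`. -/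
def stdVec (n : ℕ) (i : ℕ) : Fin n → ℚ := fun j => if (j : ℕ) = i then 1 else 0

namespace DepthChartAux

open Module Submodule

/-- The coefficient rows of the six vectors of a block, over `ℤ`. -/
def mZ : Fin 6 → Fin 3 → ℤ
  | 0 => ![1,0,0]
  | 1 => ![0,1,0]
  | 2 => ![0,0,1]
  | 3 => ![1,-1,0]
  | 4 => ![0,1,-1]
  | 5 => ![1,0,-1]

/-- 3×3 determinant of three rows. -/
def det3 (a b c : Fin 3 → ℤ) : ℤ :=
  a 0 * (b 1 * c 2 - b 2 * c 1) - a 1 * (b 0 * c 2 - b 2 * c 0)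
    + a 2 * (b 0 * c 1 - b 1 * c 0)

lemma fact1 : ∀ t : Fin 6, ∃ p : Fin 3, mZ t p ≠ 0 := by decide

lemma fact2 : ∀ t s : Fin 6, t ≠ s → ∃ p q : Fin 3,
    mZ t p * mZ s q - mZ t q * mZ s p ≠ 0 := by decide

lemma fact_inj : ∀ t s : Fin 6, (∀ p, mZ t p = mZ s p) → t = s := by decide

lemma fact3 : ∀ t1 t2 t3 t4 : Fin 6,
    (t1 = t2 ∨ t1 = t3 ∨ t1 = t4 ∨ t2 = t3 ∨ t2 = t4 ∨ t3 = t4) ∨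
    (det3 (mZ t1) (mZ t2) (mZ t3) ≠ 0 ∨ det3 (mZ t1) (mZ t2) (mZ t4) ≠ 0 ∨
     det3 (mZ t1) (mZ t3) (mZ t4) ≠ 0 ∨ det3 (mZ t2) (mZ t3) (mZ t4) ≠ 0) := by decide

/-- Two vectors with an invertible 2×2 coordinate minor are linearly independent. -/
lemma li2 {n : ℕ} {v1 v2 : Fin n → ℚ} (j1 j2 : Fin n)
    (h : v1 j1 * v2 j2 - v1 j2 * v2 j1 ≠ 0) : LinearIndependent ℚ ![v1, v2] := by
  rw [LinearIndependent.pair_iff]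
  intro a b hab
  have e1 := congrFun hab j1
  have e2 := congrFun hab j2
  simp only [Pi.add_apply, Pi.smul_apply, Pi.zero_apply, smul_eq_mul] at e1 e2
  constructor
  · have : a * (v1 j1 * v2 j2 - v1 j2 * v2 j1) = 0 := by
      linear_combination v2 j2 * e1 - v2 j1 * e2
    exact (mul_eq_zero.mp this).resolve_right h
  · have : b * (v1 j1 * v2 j2 - v1 j2 * v2 j1) = 0 := by
      linear_combination (- v1 j2) * e1 + v1 j1 * e2
    exact (mul_eq_zero.mp this).resolve_right h

/-- Three vectors with an invertible 3×3 coordinate minor are linearly independent. -/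
lemma li3 {n : ℕ} {v1 v2 v3 : Fin n → ℚ} (j1 j2 j3 : Fin n)
    (h : v1 j1 * (v2 j2 * v3 j3 - v2 j3 * v3 j2) - v1 j2 * (v2 j1 * v3 j3 - v2 j3 * v3 j1)
        + v1 j3 * (v2 j1 * v3 j2 - v2 j2 * v3 j1) ≠ 0) :
    LinearIndependent ℚ ![v1, v2, v3] := by
  rw [Fintype.linearIndependent_iff]
  intro g hg
  have hg' : g 0 • v1 + g 1 • v2 + g 2 • v3 = 0 := by
    have h2 := hg
    rw [Fin.sum_univ_three] at h2
    simpa using h2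
  have e1 := congrFun hg' j1
  have e2 := congrFun hg' j2
  have e3 := congrFun hg' j3
  simp only [Pi.add_apply, Pi.smul_apply, Pi.zero_apply, smul_eq_mul] at e1 e2 e3
  have h0 : g 0 * (v1 j1 * (v2 j2 * v3 j3 - v2 j3 * v3 j2)
      - v1 j2 * (v2 j1 * v3 j3 - v2 j3 * v3 j1)
      + v1 j3 * (v2 j1 * v3 j2 - v2 j2 * v3 j1)) = 0 := by
    linear_combination (v2 j2 * v3 j3 - v2 j3 * v3 j2) * e1
      - (v2 j1 * v3 j3 - v2 j3 * v3 j1) * e2 + (v2 j1 * v3 j2 - v2 j2 * v3 j1) * e3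
  have h1 : g 1 * (v1 j1 * (v2 j2 * v3 j3 - v2 j3 * v3 j2)
      - v1 j2 * (v2 j1 * v3 j3 - v2 j3 * v3 j1)
      + v1 j3 * (v2 j1 * v3 j2 - v2 j2 * v3 j1)) = 0 := by
    linear_combination (-(v1 j2 * v3 j3 - v1 j3 * v3 j2)) * e1
      + (v1 j1 * v3 j3 - v1 j3 * v3 j1) * e2 + (-(v1 j1 * v3 j2 - v1 j2 * v3 j1)) * e3
  have h2 : g 2 * (v1 j1 * (v2 j2 * v3 j3 - v2 j3 * v3 j2)
      - v1 j2 * (v2 j1 * v3 j3 - v2 j3 * v3 j1)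
      + v1 j3 * (v2 j1 * v3 j2 - v2 j2 * v3 j1)) = 0 := by
    linear_combination (v1 j2 * v2 j3 - v1 j3 * v2 j2) * e1
      - (v1 j1 * v2 j3 - v1 j3 * v2 j1) * e2 + (v1 j1 * v2 j2 - v1 j2 * v2 j1) * e3
  intro i
  fin_cases i
  · exact (mul_eq_zero.mp h0).resolve_right h
  · exact (mul_eq_zero.mp h1).resolve_right h
  · exact (mul_eq_zero.mp h2).resolve_right h

/-- The six vectors of block `β`. -/
def wv (n β : ℕ) : Fin 6 → (Fin n → ℚ)
  | 0 => stdVec n (3*β)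
  | 1 => stdVec n (3*β+1)
  | 2 => stdVec n (3*β+2)
  | 3 => stdVec n (3*β) - stdVec n (3*β+1)
  | 4 => stdVec n (3*β+1) - stdVec n (3*β+2)
  | 5 => stdVec n (3*β) - stdVec n (3*β+2)

/-- Coordinate index `3γ + s`. -/
def idx (k γ : ℕ) (hγ : γ < k) (s : Fin 3) : Fin (3*k) := ⟨3*γ + s, by omega⟩

lemma wv_idx {k : ℕ} (β γ : ℕ) (hγ : γ < k) (s : Fin 3) (t : Fin 6) :
    wv (3*k) β t (idx k γ hγ s) = if γ = β then (mZ t s : ℚ) else 0 := by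
  obtain ⟨s, hs⟩ := s
  interval_cases s <;> fin_cases t <;>
    simp [wv, mZ, stdVec, idx] <;>
    (try split_ifs) <;> first | (exfalso; omega) | omega | decide | norm_num
  all_goals exact if_neg (by omega)

lemma li_pair_same {k β : ℕ} (hβ : β < k) {t s : Fin 6} (hts : t ≠ s) :
    LinearIndependent ℚ ![wv (3*k) β t, wv (3*k) β s] := by
  obtain ⟨p, q, hpq⟩ := fact2 t s hts
  apply li2 (idx k β hβ p) (idx k β hβ q)
  simp only [wv_idx, eq_self_iff_true, if_true]
  intro h
  exact hpq (by exact_mod_cast h)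

lemma li_pair_diff {k β γ : ℕ} (hβ : β < k) (hγ : γ < k) (hbg : β ≠ γ) (t s : Fin 6) :
    LinearIndependent ℚ ![wv (3*k) β t, wv (3*k) γ s] := by
  obtain ⟨p, hp⟩ := fact1 t
  obtain ⟨q, hq⟩ := fact1 s
  have hp' : (mZ t p : ℚ) ≠ 0 := Int.cast_ne_zero.mpr hp
  have hq' : (mZ s q : ℚ) ≠ 0 := Int.cast_ne_zero.mpr hq
  apply li2 (idx k β hβ p) (idx k γ hγ q)
  simp only [wv_idx, eq_self_iff_true, if_true, hbg, Ne.symm hbg, if_false]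
  intro h
  exact mul_ne_zero hp' hq' (by linear_combination h)

lemma li_tri_same {k β : ℕ} (hβ : β < k) {t1 t2 t3 : Fin 6}
    (hd : det3 (mZ t1) (mZ t2) (mZ t3) ≠ 0) :
    LinearIndependent ℚ ![wv (3*k) β t1, wv (3*k) β t2, wv (3*k) β t3] := by
  have hd' : ((det3 (mZ t1) (mZ t2) (mZ t3) : ℤ) : ℚ) ≠ 0 := Int.cast_ne_zero.mpr hd
  apply li3 (idx k β hβ 0) (idx k β hβ 1) (idx k β hβ 2)
  simp only [wv_idx, eq_self_iff_true, if_true]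
  intro h
  apply hd'
  simp only [det3]
  push_cast
  linear_combination h

lemma li_tri_two {k β γ : ℕ} (hβ : β < k) (hγ : γ < k) (hbg : β ≠ γ) {t1 t2 : Fin 6}
    (h12 : t1 ≠ t2) (u : Fin 6) :
    LinearIndependent ℚ ![wv (3*k) β t1, wv (3*k) β t2, wv (3*k) γ u] := by
  obtain ⟨p, q, hpq⟩ := fact2 t1 t2 h12
  obtain ⟨r, hr⟩ := fact1 u
  have h1 : (((mZ t1 p * mZ t2 q - mZ t1 q * mZ t2 p) * mZ u r : ℤ) : ℚ) ≠ 0 :=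
    Int.cast_ne_zero.mpr (mul_ne_zero hpq hr)
  apply li3 (idx k β hβ p) (idx k β hβ q) (idx k γ hγ r)
  simp only [wv_idx, eq_self_iff_true, if_true, hbg, Ne.symm hbg, if_false]
  intro h
  apply h1
  push_cast
  linear_combination h

lemma li_tri_diff {k β γ δ : ℕ} (hβ : β < k) (hγ : γ < k) (hδ : δ < k)
    (hbg : β ≠ γ) (hbd : β ≠ δ) (hgd : γ ≠ δ) (t s u : Fin 6) :
    LinearIndependent ℚ ![wv (3*k) β t, wv (3*k) γ s, wv (3*k) δ u] := by
  obtain ⟨p, hp⟩ := fact1 t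
  obtain ⟨q, hq⟩ := fact1 s
  obtain ⟨r, hr⟩ := fact1 u
  have h1 : ((mZ t p * (mZ s q * mZ u r) : ℤ) : ℚ) ≠ 0 :=
    Int.cast_ne_zero.mpr (mul_ne_zero hp (mul_ne_zero hq hr))
  apply li3 (idx k β hβ p) (idx k γ hγ q) (idx k δ hδ r)
  simp only [wv_idx, eq_self_iff_true, if_true, hbg, Ne.symm hbg, hbd, Ne.symm hbd,
    hgd, Ne.symm hgd, if_false]
  intro h
  apply h1
  push_cast
  linear_combination h

lemma depthChart_eq {n : ℕ} (A : Finset (Fin n → ℚ)) (m r : ℕ) (hm : m ≤ A.card)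
    (hub : ∃ S ∈ A.powersetCard m,
      Module.finrank ℚ (Submodule.span ℚ (S : Set (Fin n → ℚ))) ≤ r)
    (hlb : ∀ S ∈ A.powersetCard m,
      r ≤ Module.finrank ℚ (Submodule.span ℚ (S : Set (Fin n → ℚ)))) :
    depthChart A (m : ℤ) = (r : ℤ) := by
  have hcond : 0 ≤ (m : ℤ) ∧ (m : ℤ) ≤ (A.card : ℤ) :=
    ⟨Int.natCast_nonneg m, by exact_mod_cast hm⟩
  unfold depthChart
  rw [dif_pos hcond]
  have htn : ((m : ℤ)).toNat = m := Int.toNat_natCast m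
  apply le_antisymm
  · obtain ⟨S, hS, hSr⟩ := hub
    have hS' : S ∈ A.powersetCard ((m : ℤ)).toNat := by rw [htn]; exact hS
    exact le_trans (Finset.inf'_le _ hS') (by exact_mod_cast hSr)
  · apply Finset.le_inf'
    intro S hS
    have hS' : S ∈ A.powersetCard m := by rwa [htn] at hS
    exact_mod_cast hlb S hS'

end DepthChartAux

open DepthChartAux Module Submodule in
/-- For `k ≥ 1`, the set `C ⊆ ℚ^{3k}` consisting, for each `β = 0, …, k - 1`, of the
six vectors `e_{3β+1}, e_{3β+2}, e_{3β+3}, e_{3β+1} - e_{3β+2}, e_{3β+2} - e_{3β+3},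
e_{3β+1} - e_{3β+3}` (standard basis indexed from `1`) has depth chart beginning
`0, 1, 2, 2, 3, 3, 3`. -/
theorem depthChart_z3k (k : ℕ) (hk : 1 ≤ k)
    (C : Finset (Fin (3 * k) → ℚ))
    (hC : C = (Finset.range k).biUnion (fun β =>
      {stdVec (3 * k) (3 * β), stdVec (3 * k) (3 * β + 1), stdVec (3 * k) (3 * β + 2),
       stdVec (3 * k) (3 * β) - stdVec (3 * k) (3 * β + 1),
       stdVec (3 * k) (3 * β + 1) - stdVec (3 * k) (3 * β + 2),
       stdVec (3 * k) (3 * β) - stdVec (3 * k) (3 * β + 2)})) :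
    depthChart C 0 = 0 ∧ depthChart C 1 = 1 ∧ depthChart C 2 = 2 ∧
    depthChart C 3 = 2 ∧ depthChart C 4 = 3 ∧ depthChart C 5 = 3 ∧
    depthChart C 6 = 3 := by
  -- membership description
  have memC : ∀ v, v ∈ C ↔ ∃ β, β < k ∧ ∃ t : Fin 6, v = wv (3*k) β t := by
    intro v
    rw [hC]
    simp only [Finset.mem_biUnion, Finset.mem_range, Finset.mem_insert, Finset.mem_singleton]
    constructor
    · rintro ⟨β, hβ, h⟩
      refine ⟨β, hβ, ?_⟩
      rcases h with h|h|h|h|h|h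
      · exact ⟨0, h⟩
      · exact ⟨1, h⟩
      · exact ⟨2, h⟩
      · exact ⟨3, h⟩
      · exact ⟨4, h⟩
      · exact ⟨5, h⟩
    · rintro ⟨β, hβ, t, rfl⟩
      refine ⟨β, hβ, ?_⟩
      fin_cases t <;> simp [wv]
  have wvinj : ∀ (β : ℕ), β < k → ∀ t s : Fin 6, wv (3*k) β t = wv (3*k) β s → t = s := by
    intro β hβ t s h
    apply fact_inj
    intro p
    have h2 := congrFun h (idx k β hβ p)
    rw [wv_idx, wv_idx, if_pos rfl, if_pos rfl] at h2
    exact_mod_cast h2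
  have wvnz : ∀ (β : ℕ) (hβ : β < k) (t : Fin 6), wv (3*k) β t ≠ 0 := by
    intro β hβ t h0
    obtain ⟨p, hp⟩ := fact1 t
    have h2 := congrFun h0 (idx k β hβ p)
    rw [wv_idx, if_pos rfl] at h2
    simp only [Pi.zero_apply] at h2
    exact hp (by exact_mod_cast h2)
  have vnz : ∀ v ∈ C, v ≠ (0 : Fin (3*k) → ℚ) := by
    intro v hv
    obtain ⟨β, hβ, t, rfl⟩ := (memC v).mp hv
    exact wvnz β hβ t
  have pairli : ∀ u v, u ∈ C → v ∈ C → u ≠ v → LinearIndependent ℚ ![u, v] := by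
    intro u v hu hv huv
    obtain ⟨β, hβ, t, rfl⟩ := (memC u).mp hu
    obtain ⟨γ, hγ, s, rfl⟩ := (memC v).mp hv
    by_cases hbg : β = γ
    · subst hbg
      exact li_pair_same hβ (fun h => huv (by rw [h]))
    · exact li_pair_diff hβ hγ hbg t s
  -- rank lower bound helpers
  have rank2 : ∀ (S : Finset (Fin (3*k) → ℚ)) (u v : Fin (3*k) → ℚ), u ∈ S → v ∈ S →
      LinearIndependent ℚ ![u, v] → 2 ≤ finrank ℚ (span ℚ (S : Set (Fin (3*k) → ℚ))) := by
    intro S u v hu hv hli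
    have hsub : Set.range ![u, v] ⊆ (S : Set (Fin (3*k) → ℚ)) := by
      rw [Set.range_subset_iff]
      intro i
      fin_cases i
      · simpa using hu
      · simpa using hv
    calc (2 : ℕ) = finrank ℚ (span ℚ (Set.range ![u, v])) := by
          rw [finrank_span_eq_card hli]; simp
      _ ≤ finrank ℚ (span ℚ (S : Set (Fin (3*k) → ℚ))) :=
          Submodule.finrank_mono (span_mono hsub)
  have rank3 : ∀ (S : Finset (Fin (3*k) → ℚ)) (u v w : Fin (3*k) → ℚ), u ∈ S → v ∈ S → w ∈ S →
      LinearIndependent ℚ ![u, v, w] → 3 ≤ finrank ℚ (span ℚ (S : Set (Fin (3*k) → ℚ))) := by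
    intro S u v w hu hv hw hli
    have hsub : Set.range ![u, v, w] ⊆ (S : Set (Fin (3*k) → ℚ)) := by
      rw [Set.range_subset_iff]
      intro i
      fin_cases i
      · simpa using hu
      · simpa using hv
      · simpa using hw
    calc (3 : ℕ) = finrank ℚ (span ℚ (Set.range ![u, v, w])) := by
          rw [finrank_span_eq_card hli]; simp
      _ ≤ finrank ℚ (span ℚ (S : Set (Fin (3*k) → ℚ))) :=
          Submodule.finrank_mono (span_mono hsub)
  -- every 4-element subset of C contains a linearly independent triple
  have tri : ∀ S : Finset (Fin (3*k) → ℚ), S ⊆ C → S.card = 4 →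
      ∃ u v w, u ∈ S ∧ v ∈ S ∧ w ∈ S ∧ LinearIndependent ℚ ![u, v, w] := by
    intro S hSC h4
    obtain ⟨a, haS⟩ := Finset.card_pos.mp (show 0 < S.card by omega)
    have h3 : (S.erase a).card = 3 := by rw [Finset.card_erase_of_mem haS, h4]
    obtain ⟨b, c, d, hbc, hbd, hcd, hT⟩ := Finset.card_eq_three.mp h3
    have hbE : b ∈ S.erase a := by rw [hT]; simp
    have hcE : c ∈ S.erase a := by rw [hT]; simp
    have hdE : d ∈ S.erase a := by rw [hT]; simp
    have hbS := Finset.mem_of_mem_erase hbE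
    have hcS := Finset.mem_of_mem_erase hcE
    have hdS := Finset.mem_of_mem_erase hdE
    have hab : a ≠ b := (Finset.ne_of_mem_erase hbE).symm
    have hac : a ≠ c := (Finset.ne_of_mem_erase hcE).symm
    have had : a ≠ d := (Finset.ne_of_mem_erase hdE).symm
    obtain ⟨βa, hβa, ta, rfl⟩ := (memC a).mp (hSC haS)
    obtain ⟨βb, hβb, tb, rfl⟩ := (memC b).mp (hSC hbS)
    obtain ⟨βc, hβc, tc, rfl⟩ := (memC c).mp (hSC hcS)
    obtain ⟨βd, hβd, td, rfl⟩ := (memC d).mp (hSC hdS)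
    by_cases h1 : βa = βb
    · subst h1
      by_cases h2 : βa = βc
      · subst h2
        by_cases h3' : βa = βd
        · subst h3'
          have tab : ta ≠ tb := fun h => hab (by rw [h])
          have tac : ta ≠ tc := fun h => hac (by rw [h])
          have tad : ta ≠ td := fun h => had (by rw [h])
          have tbc : tb ≠ tc := fun h => hbc (by rw [h])
          have tbd : tb ≠ td := fun h => hbd (by rw [h])
          have tcd : tc ≠ td := fun h => hcd (by rw [h])
          rcases fact3 ta tb tc td with (h|h|h|h|h|h) | (h|h|h|h)
          · exact absurd h tab
          · exact absurd h tac
          · exact absurd h tad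
          · exact absurd h tbc
          · exact absurd h tbd
          · exact absurd h tcd
          · exact ⟨_, _, _, haS, hbS, hcS, li_tri_same hβa h⟩
          · exact ⟨_, _, _, haS, hbS, hdS, li_tri_same hβa h⟩
          · exact ⟨_, _, _, haS, hcS, hdS, li_tri_same hβa h⟩
          · exact ⟨_, _, _, hbS, hcS, hdS, li_tri_same hβa h⟩
        · have tab : ta ≠ tb := fun h => hab (by rw [h])
          exact ⟨_, _, _, haS, hbS, hdS, li_tri_two hβa hβd h3' tab td⟩
      · have tab : ta ≠ tb := fun h => hab (by rw [h])
        exact ⟨_, _, _, haS, hbS, hcS, li_tri_two hβa hβc h2 tab tc⟩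
    · by_cases h2 : βa = βc
      · subst h2
        have tac : ta ≠ tc := fun h => hac (by rw [h])
        exact ⟨_, _, _, haS, hcS, hbS, li_tri_two hβa hβb h1 tac tb⟩
      · by_cases h3' : βb = βc
        · subst h3'
          have tbc : tb ≠ tc := fun h => hbc (by rw [h])
          exact ⟨_, _, _, hbS, hcS, haS, li_tri_two hβb hβa (fun h => h1 h.symm) tbc ta⟩
        · exact ⟨_, _, _, haS, hbS, hcS, li_tri_diff hβa hβb hβc h1 h2 h3' ta tb tc⟩
  have lb3 : ∀ S : Finset (Fin (3*k) → ℚ), S ⊆ C → 4 ≤ S.card →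
      3 ≤ finrank ℚ (span ℚ (S : Set (Fin (3*k) → ℚ))) := by
    intro S hSC hS4
    obtain ⟨T, hTS, hT4⟩ := Finset.exists_subset_card_eq hS4
    obtain ⟨u, v, w, hu, hv, hw, hli⟩ := tri T (fun x hx => hSC (hTS hx)) hT4
    exact rank3 S u v w (hTS hu) (hTS hv) (hTS hw) hli
  have lb2 : ∀ S : Finset (Fin (3*k) → ℚ), S ⊆ C → 2 ≤ S.card →
      2 ≤ finrank ℚ (span ℚ (S : Set (Fin (3*k) → ℚ))) := by
    intro S hSC hS2
    obtain ⟨u, hu, v, hv, huv⟩ := Finset.one_lt_card.mp (show 1 < S.card by omega)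
    exact rank2 S u v hu hv (pairli u v (hSC hu) (hSC hv) huv)
  -- witness subsets as images of subsets of `Fin 6` in block 0
  have hk0 : 0 < k := hk
  have winj : Function.Injective (wv (3*k) 0) := fun t s h => wvinj 0 hk0 t s h
  have Wcard : ∀ T : Finset (Fin 6), (T.image (wv (3*k) 0)).card = T.card :=
    fun T => Finset.card_image_of_injective T winj
  have Wsub : ∀ T : Finset (Fin 6), T.image (wv (3*k) 0) ⊆ C := by
    intro T v hv
    obtain ⟨t, _, rfl⟩ := Finset.mem_image.mp hv
    exact (memC _).mpr ⟨0, hk0, t, rfl⟩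
  have hcard6 : 6 ≤ C.card := by
    have h1 : (({0,1,2,3,4,5} : Finset (Fin 6)).image (wv (3*k) 0)).card = 6 := by
      rw [Wcard]; decide
    calc 6 = (({0,1,2,3,4,5} : Finset (Fin 6)).image (wv (3*k) 0)).card := h1.symm
      _ ≤ C.card := Finset.card_le_card (Wsub _)
  -- upper bound tool: everything in block 0 lies in the span of its three basis vectors
  have bound : ∀ S F : Finset (Fin (3*k) → ℚ),
      (∀ v ∈ S, v ∈ span ℚ (F : Set (Fin (3*k) → ℚ))) →
      finrank ℚ (span ℚ (S : Set (Fin (3*k) → ℚ))) ≤ F.card := by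
    intro S F h
    have h1 : span ℚ (S : Set (Fin (3*k) → ℚ)) ≤ span ℚ (F : Set (Fin (3*k) → ℚ)) :=
      span_le.mpr (fun v hv => h v hv)
    exact le_trans (Submodule.finrank_mono h1) (finrank_span_finset_le_card F)
  have memspan : ∀ (T F : Finset (Fin 6)), (∀ t ∈ T, ∀ p, (mZ t p ≠ 0) → True) → True :=
    fun _ _ _ => trivial
  -- the span facts for the specific witnesses
  have span012 : ∀ t : Fin 6,
      wv (3*k) 0 t ∈ span ℚ ((({0,1,2} : Finset (Fin 6)).image (wv (3*k) 0) : Set (Fin (3*k) → ℚ))) := by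
    intro t
    have m0 : wv (3*k) 0 0 ∈ (({0,1,2} : Finset (Fin 6)).image (wv (3*k) 0) : Set (Fin (3*k) → ℚ)) := by
      simp only [Finset.coe_image, Set.mem_image]; exact ⟨0, by simp, rfl⟩
    have m1 : wv (3*k) 0 1 ∈ (({0,1,2} : Finset (Fin 6)).image (wv (3*k) 0) : Set (Fin (3*k) → ℚ)) := by
      simp only [Finset.coe_image, Set.mem_image]; exact ⟨1, by simp, rfl⟩
    have m2 : wv (3*k) 0 2 ∈ (({0,1,2} : Finset (Fin 6)).image (wv (3*k) 0) : Set (Fin (3*k) → ℚ)) := by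
      simp only [Finset.coe_image, Set.mem_image]; exact ⟨2, by simp, rfl⟩
    fin_cases t
    · exact subset_span m0
    · exact subset_span m1
    · exact subset_span m2
    · exact sub_mem (subset_span m0) (subset_span m1)
    · exact sub_mem (subset_span m1) (subset_span m2)
    · exact sub_mem (subset_span m0) (subset_span m2)
  have span01 : ∀ t ∈ ({0,1,3} : Finset (Fin 6)),
      wv (3*k) 0 t ∈ span ℚ ((({0,1} : Finset (Fin 6)).image (wv (3*k) 0) : Set (Fin (3*k) → ℚ))) := by
    intro t ht
    have m0 : wv (3*k) 0 0 ∈ (({0,1} : Finset (Fin 6)).image (wv (3*k) 0) : Set (Fin (3*k) → ℚ)) := by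
      simp only [Finset.coe_image, Set.mem_image]; exact ⟨0, by simp, rfl⟩
    have m1 : wv (3*k) 0 1 ∈ (({0,1} : Finset (Fin 6)).image (wv (3*k) 0) : Set (Fin (3*k) → ℚ)) := by
      simp only [Finset.coe_image, Set.mem_image]; exact ⟨1, by simp, rfl⟩
    fin_cases ht
    · exact subset_span m0
    · exact subset_span m1
    · exact sub_mem (subset_span m0) (subset_span m1)
  -- now the seven values
  refine ⟨?_, ?_, ?_, ?_, ?_, ?_, ?_⟩
  -- m = 0
  · have h := depthChart_eq C 0 0 (by omega)
      ⟨∅, Finset.mem_powersetCard.mpr ⟨Finset.empty_subset C, rfl⟩, by simp⟩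
      (fun S _ => Nat.zero_le _)
    exact_mod_cast h
  -- m = 1
  · have h := depthChart_eq C 1 1 (by omega)
      ⟨({0} : Finset (Fin 6)).image (wv (3*k) 0),
        Finset.mem_powersetCard.mpr ⟨Wsub _, by rw [Wcard]; decide⟩, by
          rw [Finset.image_singleton, Finset.coe_singleton]
          exact le_of_eq (finrank_span_singleton (wvnz 0 hk0 0))⟩
      (by
        intro S hS
        rw [Finset.mem_powersetCard] at hS
        obtain ⟨hSC, hS1⟩ := hS
        obtain ⟨v, hv⟩ := Finset.card_pos.mp (show 0 < S.card by omega)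
        have hvC := hSC hv
        have hsub : ({v} : Set (Fin (3*k) → ℚ)) ⊆ (S : Set (Fin (3*k) → ℚ)) := by
          simpa using hv
        calc (1 : ℕ) = finrank ℚ (span ℚ ({v} : Set (Fin (3*k) → ℚ))) :=
              (finrank_span_singleton (vnz v hvC)).symm
          _ ≤ finrank ℚ (span ℚ (S : Set (Fin (3*k) → ℚ))) :=
              Submodule.finrank_mono (span_mono hsub))
    exact_mod_cast h
  -- m = 2
  · have h := depthChart_eq C 2 2 (by omega)
      ⟨({0,1} : Finset (Fin 6)).image (wv (3*k) 0),
        Finset.mem_powersetCard.mpr ⟨Wsub _, by rw [Wcard]; decide⟩, by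
          refine le_trans (finrank_span_finset_le_card _) ?_
          rw [Wcard]; decide⟩
      (by
        intro S hS
        rw [Finset.mem_powersetCard] at hS
        exact lb2 S hS.1 (by omega))
    exact_mod_cast h
  -- m = 3
  · have h := depthChart_eq C 3 2 (by omega)
      ⟨({0,1,3} : Finset (Fin 6)).image (wv (3*k) 0),
        Finset.mem_powersetCard.mpr ⟨Wsub _, by rw [Wcard]; decide⟩, by
          refine le_trans (bound _ (({0,1} : Finset (Fin 6)).image (wv (3*k) 0)) ?_) ?_
          · intro v hv
            obtain ⟨t, ht, rfl⟩ := Finset.mem_image.mp hv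
            exact span01 t ht
          · rw [Wcard]; decide⟩
      (by
        intro S hS
        rw [Finset.mem_powersetCard] at hS
        exact lb2 S hS.1 (by omega))
    exact_mod_cast h
  -- m = 4
  · have h := depthChart_eq C 4 3 (by omega)
      ⟨({0,1,2,3} : Finset (Fin 6)).image (wv (3*k) 0),
        Finset.mem_powersetCard.mpr ⟨Wsub _, by rw [Wcard]; decide⟩, by
          refine le_trans (bound _ (({0,1,2} : Finset (Fin 6)).image (wv (3*k) 0)) ?_) ?_
          · intro v hv
            obtain ⟨t, _, rfl⟩ := Finset.mem_image.mp hv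
            exact span012 t
          · rw [Wcard]; decide⟩
      (by
        intro S hS
        rw [Finset.mem_powersetCard] at hS
        exact lb3 S hS.1 (by omega))
    exact_mod_cast h
  -- m = 5
  · have h := depthChart_eq C 5 3 (by omega)
      ⟨({0,1,2,3,4} : Finset (Fin 6)).image (wv (3*k) 0),
        Finset.mem_powersetCard.mpr ⟨Wsub _, by rw [Wcard]; decide⟩, by
          refine le_trans (bound _ (({0,1,2} : Finset (Fin 6)).image (wv (3*k) 0)) ?_) ?_
          · intro v hv
            obtain ⟨t, _, rfl⟩ := Finset.mem_image.mp hv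
            exact span012 t
          · rw [Wcard]; decide⟩
      (by
        intro S hS
        rw [Finset.mem_powersetCard] at hS
        exact lb3 S hS.1 (by omega))
    exact_mod_cast h
  -- m = 6
  · have h := depthChart_eq C 6 3 (by omega)
      ⟨({0,1,2,3,4,5} : Finset (Fin 6)).image (wv (3*k) 0),
        Finset.mem_powersetCard.mpr ⟨Wsub _, by rw [Wcard]; decide⟩, by
          refine le_trans (bound _ (({0,1,2} : Finset (Fin 6)).image (wv (3*k) 0)) ?_) ?_
          · intro v hv
            obtain ⟨t, _, rfl⟩ := Finset.mem_image.mp hv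
            exact span012 t
          · rw [Wcard]; decide⟩
      (by
        intro S hS
        rw [Finset.mem_powersetCard] at hS
        exact lb3 S hS.1 (by omega))
    exact_mod_cast h
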